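/- Let U be a finite set with |U| = N ≥ 2, α > 0, c > 0, and let d be the scaled discrete metric d(x,y) = c for x ≠ y and d(x,x) = 0. For any true-count function t : U → ℝ, define obs(y) = Σ_{x∈U} t(x)·Pr[Φ_EM(x) = y], where Φ_EM is the Exponential Mechanism with metric d and parameter α. Then the expected observed counts preserve relative frequency rankings: for all v_i, v_j ∈ U, t(v_i) > t(v_j) if and only if obs(v_i) > obs(v_j). -/

import Mathlib

/-- Under the scaled discrete metric, the expected observed counts of the
Exponential Mechanism preserve relative frequency rankings. -/
theorem em_preserves_ranking {U : Type*} [Fintype U] [DecidableEq U]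
    (hcard : 2 ≤ Fintype.card U)
    (α c : ℝ) (hα : 0 < α) (hc : 0 < c)
    (d : U → U → ℝ) (hd : ∀ x y, d x y = if x = y then 0 else c)
    (t : U → ℝ) (obs : U → ℝ)
    (hobs : ∀ y, obs y =
      ∑ x, t x * (Real.exp (-α * d x y / 2) / ∑ z, Real.exp (-α * d x z / 2)))
    (vi vj : U) :
    t vi > t vj ↔ obs vi > obs vj := by
  set e : ℝ := Real.exp (-α * c / 2) with he
  have he0 : 0 < e := Real.exp_pos _
  have he1 : e < 1 := by
    rw [he]
    have : -α * c / 2 < 0 := by nlinarith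
    simpa using Real.exp_lt_one_iff.mpr this
  set Z : ℝ := 1 + (Fintype.card U - 1 : ℝ) * e with hZ
  have hZ0 : 0 < Z := by
    have : (2:ℝ) ≤ (Fintype.card U : ℝ) := by exact_mod_cast hcard
    nlinarith
  have hterm : ∀ x z : U, Real.exp (-α * d x z / 2) = if x = z then 1 else e := by
    intro x z
    rw [hd]
    by_cases h : x = z <;> simp [h, he]
  have hsum : ∀ x : U, (∑ z, Real.exp (-α * d x z / 2)) = Z := by
    intro x
    have : (∑ z, Real.exp (-α * d x z / 2)) = ∑ z, (if x = z then 1 else e) := by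
      exact Finset.sum_congr rfl fun z _ => hterm x z
    have h2 : ∀ z : U, (if x = z then (1:ℝ) else e) = e + if x = z then 1 - e else 0 := by
      intro z; by_cases h : x = z <;> simp [h]
    rw [this, Finset.sum_congr rfl fun z _ => h2 z, Finset.sum_add_distrib,
      Finset.sum_ite_eq Finset.univ x (fun _ => (1:ℝ) - e)]
    simp [hZ, Finset.sum_const, Finset.card_univ]
    ring
  have hobs' : ∀ y, obs y = (t y * (1 - e) + (∑ x, t x) * e) / Z := by
    intro y
    rw [hobs]
    have : ∀ x : U, t x * (Real.exp (-α * d x y / 2) / ∑ z, Real.exp (-α * d x z / 2))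
        = t x * (if x = y then 1 else e) / Z := by
      intro x
      rw [hsum, hterm]
      ring
    rw [Finset.sum_congr rfl fun x _ => this x]
    rw [← Finset.sum_div]
    congr 1
    have : (∑ x, t x * (if x = y then 1 else e))
        = ∑ x, (t x * e + if x = y then t x * (1 - e) else 0) := by
      apply Finset.sum_congr rfl
      intro x _
      by_cases h : x = y <;> simp [h] <;> ring
    rw [this, Finset.sum_add_distrib, Finset.sum_ite_eq' Finset.univ y (fun x => t x * (1 - e))]
    simp [← Finset.sum_mul]
    ring
  rw [hobs' vi, hobs' vj, gt_iff_lt, gt_iff_lt, div_lt_div_iff₀ hZ0 hZ0,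
    mul_lt_mul_iff_left₀ hZ0, add_lt_add_iff_right,
    mul_lt_mul_iff_left₀ (by linarith : (0:ℝ) < 1 - e)]
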